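/- Let x be an infinite word over Σ₃, and suppose that for some n ≥ 0 the infinite word τ(g(fⁿ(x))) is 16/7-power-free. Then x is 5-power-free and even-3-power-free (x contains no factor of exponent ≥ 5, and no factor that is a cube p³ where p contains an even number of 2's). -/

import Mathlib

abbrev Word := List (Fin 3)
abbrev InfWord := ℕ → Fin 3

/-- `u` is a (finite, contiguous) factor of the infinite word `w`. -/
def IsFactor (w : InfWord) (u : Word) : Prop :=
  ∃ i : ℕ, u = (List.range u.length).map fun k => w (i + k)

/-- `u` is a prefix of the infinite word `z`. -/
def IsPrefixInf (u : Word) (z : InfWord) : Prop :=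
  u = (List.range u.length).map z

/-- `p` is a period of the finite word `w`. -/
def HasPeriod (w : Word) (p : ℕ) : Prop :=
  0 < p ∧ p ≤ w.length ∧ ∀ i : ℕ, i + p < w.length → w.getD (i + p) 0 = w.getD i 0

/-- The infinite word `w` is `α`-power-free: it has no nonempty factor `u`
with a period `p` satisfying `|u|/p ≥ α`. -/
def PowerFree (α : ℚ) (w : InfWord) : Prop :=
  ∀ (u : Word) (p : ℕ), IsFactor w u → u ≠ [] → HasPeriod u p →
    (u.length : ℚ) / (p : ℚ) < α

/-- The set of palindromic factors of a finite word. -/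
def palSet (w : Word) : Set Word := {u | u <:+: w ∧ u.reverse = u}

/-- A finite word of length `n` is rich if it has exactly `n + 1`
distinct palindromic factors (including the empty word). -/
def RichWord (w : Word) : Prop := (palSet w).ncard = w.length + 1

/-- An infinite word is rich if all of its finite factors are rich. -/
def RichSeq (z : InfWord) : Prop := ∀ u : Word, IsFactor z u → RichWord u

def fm : Fin 3 → Word := ![[0, 1], [0, 2, 2], [0, 2]]
def gm : Fin 3 → Word := ![[2, 0], [2, 1], [2]]
def t1 : Fin 3 → Word :=
  ![[0, 0, 1], [0, 0, 1, 0, 1, 1, 0, 1],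
    [0, 0, 1, 0, 1, 1, 0, 1, 0, 0, 1, 0, 1, 1, 0, 1]]
def t2 : Fin 3 → Word :=
  ![[0, 0, 2], [0, 0, 2, 0, 2, 2, 0, 2],
    [0, 0, 2, 0, 2, 2, 0, 2, 0, 0, 2, 0, 2, 2, 0, 2]]

/-- The morphism `f` on finite words. -/
def fList (w : Word) : Word := w.flatMap fm
/-- The morphism `g` on finite words. -/
def gList (w : Word) : Word := w.flatMap gm

def tauAux : Bool → Word → Word
  | _, [] => []
  | b, a :: w => (if b then t1 a else t2 a) ++ tauAux (!b) w

/-- The transducer `τ` on finite words: `t1` is applied to even-indexed letters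
and `t2` to odd-indexed letters. -/
def tauList (w : Word) : Word := tauAux true w

/-- The morphism `f` on infinite words. -/
def fInf (x : InfWord) : InfWord :=
  fun i => (fList ((List.range (i + 1)).map x)).getD i 0
/-- The morphism `g` on infinite words. -/
def gInf (x : InfWord) : InfWord :=
  fun i => (gList ((List.range (i + 1)).map x)).getD i 0
/-- The transducer `τ` on infinite words. -/
def tauInf (x : InfWord) : InfWord :=
  fun i => (tauList ((List.range (i + 1)).map x)).getD i 0

/-- The critical exponent of an infinite word. -/
noncomputable def criticalExponent (z : InfWord) : ℝ :=
  sSup {r : ℝ | ∃ (u : Word) (p : ℕ), IsFactor z u ∧ u ≠ [] ∧ HasPeriod u p ∧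
    r = (u.length : ℝ) / (p : ℝ)}
/-! ### Auxiliary lemmas -/

section Aux

open List

lemma pre_add (w : InfWord) (m k : ℕ) :
    (List.range (m + k)).map w
      = (List.range m).map w ++ (List.range k).map (fun j => w (m + j)) := by
  rw [List.range_add, List.map_append, List.map_map]
  rfl

lemma pre_mono (w : InfWord) {m m' : ℕ} (h : m ≤ m') :
    (List.range m).map w <+: (List.range m').map w := by
  refine ⟨(List.range (m' - m)).map (fun j => w (m + j)), ?_⟩
  conv_rhs => rw [show m' = m + (m' - m) by omega]
  rw [pre_add]

lemma getD_prefix {a b : Word} (h : a <+: b) {j : ℕ} (hj : j < a.length) :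
    b.getD j 0 = a.getD j 0 := by
  obtain ⟨c, rfl⟩ := h
  exact List.getD_append a c 0 j hj

lemma gen_getD {F : Word → Word} {w z : InfWord}
    (hmono : ∀ a b : Word, F a <+: F (a ++ b))
    (hz : ∀ j, z j = (F ((List.range (j + 1)).map w)).getD j 0)
    (hlen : ∀ a : Word, a.length ≤ (F a).length)
    (m j : ℕ) (hj : j < (F ((List.range m).map w)).length) :
    z j = (F ((List.range m).map w)).getD j 0 := by
  have hj1 : j < (F ((List.range (j + 1)).map w)).length := by
    have h1 : (j + 1) ≤ ((List.range (j+1)).map w).length := by simp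
    have := hlen ((List.range (j+1)).map w)
    omega
  rcases le_total (j + 1) m with h | h
  · obtain ⟨c, hc⟩ := pre_mono w h
    have hp : F ((List.range (j+1)).map w) <+: F ((List.range m).map w) := by
      rw [← hc]; exact hmono _ _
    rw [hz j, getD_prefix hp hj1]
  · obtain ⟨c, hc⟩ := pre_mono w h
    have hp : F ((List.range m).map w) <+: F ((List.range (j+1)).map w) := by
      rw [← hc]; exact hmono _ _
    rw [hz j, getD_prefix hp hj]

lemma gen_prefix {F : Word → Word} {w z : InfWord}
    (hmono : ∀ a b : Word, F a <+: F (a ++ b))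
    (hz : ∀ j, z j = (F ((List.range (j + 1)).map w)).getD j 0)
    (hlen : ∀ a : Word, a.length ≤ (F a).length)
    (m L : ℕ) (hL : L ≤ (F ((List.range m).map w)).length) :
    (List.range L).map z = (F ((List.range m).map w)).take L := by
  apply List.ext_getElem
  · simp; omega
  · intro j h1 h2
    simp only [List.getElem_map, List.getElem_range, List.getElem_take]
    have hjL : j < L := by simpa using h1
    have hj : j < (F ((List.range m).map w)).length := lt_of_lt_of_le hjL hL
    rw [← List.getD_eq_getElem _ 0 hj]
    exact gen_getD hmono hz hlen m j hj

lemma gen_factor {F : Word → Word} {w z : InfWord}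
    (hmono : ∀ a b : Word, F a <+: F (a ++ b))
    (hz : ∀ j, z j = (F ((List.range (j + 1)).map w)).getD j 0)
    (hlen : ∀ a : Word, a.length ≤ (F a).length)
    (i d : ℕ) (v : Word)
    (hv : F ((List.range (i + d)).map w) = F ((List.range i).map w) ++ v) :
    ∃ c, v = (List.range v.length).map fun k => z (c + k) := by
  set c := (F ((List.range i).map w)).length with hc
  refine ⟨c, ?_⟩
  have hL : c + v.length ≤ (F ((List.range (i + d)).map w)).length := by
    rw [hv]; simp [hc]
  have hp := gen_prefix hmono hz hlen (i + d) (c + v.length) hL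
  rw [hv] at hp
  have htake : (F ((List.range i).map w) ++ v).take (c + v.length)
      = F ((List.range i).map w) ++ v := by
    apply List.take_of_length_le
    simp [hc]
  rw [htake, pre_add] at hp
  have hlen2 : ((List.range c).map z).length = (F ((List.range i).map w)).length := by
    simp [hc]
  exact (List.append_inj_right hp hlen2).symm

/-! period lemmas -/

lemma period_of_append_prefix (s r : Word) (hs : s ≠ []) (h : r <+: s ++ r) :
    _root_.HasPeriod (s ++ r) s.length := by
  refine ⟨List.length_pos_iff.mpr hs, by simp, ?_⟩
  intro i hi
  simp only [List.length_append] at hi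
  have hir : i < r.length := by omega
  rw [List.getD_append_right s r 0 (i + s.length) (by omega)]
  obtain ⟨c, hc⟩ := h
  have h1 : (s ++ r).getD i 0 = r.getD i 0 := by
    rw [← hc]; exact List.getD_append r c 0 i hir
  rw [h1]
  congr 1
  omega

lemma drop_prefix_of_period {u : Word} {p : ℕ} (hper : _root_.HasPeriod u p) :
    u.drop p <+: u := by
  obtain ⟨hp0, hple, hper⟩ := hper
  rw [List.prefix_iff_eq_take]
  apply List.ext_getElem
  · simp
  · intro i h1 h2
    rw [List.getElem_drop, List.getElem_take]
    have hi : i < u.length - p := by simpa using h1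
    have h3 := hper i (by omega)
    rw [← List.getD_eq_getElem u 0 (show p + i < u.length by omega),
      ← List.getD_eq_getElem u 0 (show i < u.length by omega), Nat.add_comm p i]
    exact h3

lemma take_step {u : Word} {p : ℕ} (hper : _root_.HasPeriod u p) {m : ℕ}
    (hm : p + m ≤ u.length) :
    u.take (p + m) = u.take p ++ u.take m := by
  rw [List.take_add]
  congr 1
  obtain ⟨c, hc⟩ := drop_prefix_of_period hper
  have hmlen : m ≤ (u.drop p).length := by simp; omega
  conv_rhs => rw [← hc]
  rw [List.take_append, show m - (u.drop p).length = 0 by omega,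
    List.take_zero, List.append_nil]

lemma period_take5 {u : Word} {p : ℕ} (hper : _root_.HasPeriod u p)
    (h5 : 5 * p ≤ u.length) :
    u.take (5 * p) = u.take p ++ (u.take p ++ (u.take p ++ (u.take p ++ u.take p))) := by
  have e2 : u.take (p + p) = u.take p ++ u.take p := take_step hper (by omega)
  have e3 : u.take (p + (p + p)) = u.take p ++ u.take (p + p) := take_step hper (by omega)
  have e4 : u.take (p + (p + (p + p))) = u.take p ++ u.take (p + (p + p)) :=
    take_step hper (by omega)
  have e5 : u.take (p + (p + (p + (p + p)))) = u.take p ++ u.take (p + (p + (p + p))) :=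
    take_step hper (by omega)
  rw [show 5 * p = p + (p + (p + (p + p))) by ring, e5, e4, e3, e2]

lemma isFactor_take {w : InfWord} {u : Word} {m : ℕ} (h : IsFactor w u)
    (hm : m ≤ u.length) : IsFactor w (u.take m) := by
  obtain ⟨i, hu⟩ := h
  refine ⟨i, ?_⟩
  have hlen : (u.take m).length = m := by
    rw [List.length_take]; omega
  rw [hlen]
  conv_lhs => rw [hu]
  rw [← List.map_take, List.take_range,
    show m ⊓ u.length = m from min_eq_left hm]

/-! f and g lemmas -/

lemma fList_append (a b : Word) : fList (a ++ b) = fList a ++ fList b :=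
  List.flatMap_append

lemma gList_append (a b : Word) : gList (a ++ b) = gList a ++ gList b :=
  List.flatMap_append

lemma fList_cons (a : Fin 3) (l : Word) : fList (a :: l) = fm a ++ fList l :=
  List.flatMap_cons

lemma gList_cons (a : Fin 3) (l : Word) : gList (a :: l) = gm a ++ gList l :=
  List.flatMap_cons

lemma fList_len (l : Word) : l.length ≤ (fList l).length := by
  induction l with
  | nil => simp [fList]
  | cons a l ih =>
    rw [fList_cons]
    have h1 : 1 ≤ (fm a).length := by fin_cases a <;> simp [fm]
    simp only [List.length_cons, List.length_append]
    omega

lemma gList_len (l : Word) : l.length ≤ (gList l).length := by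
  induction l with
  | nil => simp [gList]
  | cons a l ih =>
    rw [gList_cons]
    have h1 : 1 ≤ (gm a).length := by fin_cases a <;> simp [gm]
    simp only [List.length_cons, List.length_append]
    omega

lemma fList_count2 (l : Word) : (fList l).count 2 % 2 = l.count 2 % 2 := by
  induction l with
  | nil => simp [fList]
  | cons a l ih =>
    rw [fList_cons, List.count_append, List.count_cons]
    fin_cases a <;> simp [fm, List.count_cons] <;> omega

lemma gList_len_parity (l : Word) : (gList l).length % 2 = l.count 2 % 2 := by
  induction l with
  | nil => simp [gList]
  | cons a l ih =>
    rw [gList_cons, List.length_append, List.count_cons]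
    fin_cases a <;> simp [gm] <;> omega

lemma fListIter_append (n : ℕ) (a b : Word) :
    fList^[n] (a ++ b) = fList^[n] a ++ fList^[n] b := by
  induction n with
  | zero => rfl
  | succ n ih =>
    rw [Function.iterate_succ_apply', Function.iterate_succ_apply',
      Function.iterate_succ_apply', ih, fList_append]

lemma fListIter_len (n : ℕ) (l : Word) : l.length ≤ (fList^[n] l).length := by
  induction n with
  | zero => simp
  | succ n ih =>
    rw [Function.iterate_succ_apply']
    exact le_trans ih (fList_len _)

lemma fListIter_count2 (n : ℕ) (l : Word) :
    (fList^[n] l).count 2 % 2 = l.count 2 % 2 := by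
  induction n with
  | zero => rfl
  | succ n ih =>
    rw [Function.iterate_succ_apply', fList_count2, ih]

/-! tau lemmas -/

lemma tauAux_append (u v : Word) (b : Bool) :
    tauAux b (u ++ v)
      = tauAux b u ++ tauAux (if u.length % 2 = 0 then b else !b) v := by
  induction u generalizing b with
  | nil => simp [tauAux]
  | cons a u ih =>
    rw [List.cons_append]
    show (if b then t1 a else t2 a) ++ tauAux (!b) (u ++ v) = _
    rw [ih (!b)]
    have : tauAux b (a :: u) = (if b then t1 a else t2 a) ++ tauAux (!b) u := rfl
    rw [this, List.append_assoc]
    congr 2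
    rcases Nat.mod_two_eq_zero_or_one u.length with h | h <;>
      simp [h, List.length_cons, Nat.add_mod, Bool.not_not]

lemma tauAux_len (l : Word) (b : Bool) : l.length ≤ (tauAux b l).length := by
  induction l generalizing b with
  | nil => simp [tauAux]
  | cons a l ih =>
    show (a :: l).length ≤ ((if b then t1 a else t2 a) ++ tauAux (!b) l).length
    have h1 : 1 ≤ (if b then t1 a else t2 a).length := by
      cases b <;> fin_cases a <;> simp [t1, t2]
    have := ih (!b)
    simp only [List.length_cons, List.length_append]
    omega

lemma tauAux_len_eq (l : Word) (b b' : Bool) :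
    (tauAux b l).length = (tauAux b' l).length := by
  induction l generalizing b b' with
  | nil => rfl
  | cons a l ih =>
    show ((if b then t1 a else t2 a) ++ tauAux (!b) l).length
      = ((if b' then t1 a else t2 a) ++ tauAux (!b') l).length
    have h1 : (if b then t1 a else t2 a).length = (if b' then t1 a else t2 a).length := by
      cases b <;> cases b' <;> fin_cases a <;> simp [t1, t2]
    simp only [List.length_append, h1, ih (!b) (!b')]

/-! factor transfer lemmas -/

lemma fList_mono (a b : Word) : fList a <+: fList (a ++ b) :=
  ⟨fList b, (fList_append a b).symm⟩

lemma gList_mono (a b : Word) : gList a <+: gList (a ++ b) :=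
  ⟨gList b, (gList_append a b).symm⟩

lemma tauList_mono (a b : Word) : tauList a <+: tauList (a ++ b) :=
  ⟨tauAux (if a.length % 2 = 0 then true else !true) b, (tauAux_append a b true).symm⟩

lemma isFactor_fInf {w : InfWord} {u : Word} (h : IsFactor w u) :
    IsFactor (fInf w) (fList u) := by
  obtain ⟨i, hu⟩ := h
  have hv : fList ((List.range (i + u.length)).map w)
      = fList ((List.range i).map w) ++ fList u := by
    rw [pre_add, ← hu, fList_append]
  exact gen_factor fList_mono (fun j => rfl) fList_len i u.length (fList u) hv

lemma isFactor_gInf {w : InfWord} {u : Word} (h : IsFactor w u) :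
    IsFactor (gInf w) (gList u) := by
  obtain ⟨i, hu⟩ := h
  have hv : gList ((List.range (i + u.length)).map w)
      = gList ((List.range i).map w) ++ gList u := by
    rw [pre_add, ← hu, gList_append]
  exact gen_factor gList_mono (fun j => rfl) gList_len i u.length (gList u) hv

lemma isFactor_fInf_iter {x : InfWord} {u : Word} (n : ℕ) (h : IsFactor x u) :
    IsFactor (fInf^[n] x) (fList^[n] u) := by
  induction n with
  | zero => exact h
  | succ n ih =>
    rw [Function.iterate_succ_apply', Function.iterate_succ_apply']
    exact isFactor_fInf ih

lemma isFactor_tau {y : InfWord} {V : Word} (h : IsFactor y V) :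
    ∃ b : Bool, IsFactor (tauInf y) (tauAux b V) := by
  obtain ⟨i, hV⟩ := h
  refine ⟨if i % 2 = 0 then true else false, ?_⟩
  have hv : tauList ((List.range (i + V.length)).map y)
      = tauList ((List.range i).map y)
        ++ tauAux (if i % 2 = 0 then true else false) V := by
    show tauAux true _ = tauAux true _ ++ _
    rw [pre_add, ← hV, tauAux_append]
    congr 2
    simp
  exact gen_factor tauList_mono (fun j => rfl) (fun a => tauAux_len a true) i V.length _ hv

/-! main combinatorial lemmas -/

lemma no_even_cube {z : InfWord} (hpf : PowerFree (16 / 7) (tauInf z)) {v : Word}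
    (hv : v ≠ []) (hpar : v.length % 2 = 0)
    (hfac : IsFactor z (v ++ (v ++ v))) : False := by
  obtain ⟨b, hb⟩ := isFactor_tau hfac
  set s := tauAux b v with hs
  have hexp : tauAux b (v ++ (v ++ v)) = s ++ (s ++ s) := by
    rw [tauAux_append, if_pos hpar, tauAux_append, if_pos hpar]
  rw [hexp] at hb
  have hslen : 0 < s.length := by
    rw [hs]
    have h1 := tauAux_len v b
    have h2 : 0 < v.length := List.length_pos_iff.mpr hv
    omega
  have hsne : s ≠ [] := by
    intro h; rw [h] at hslen; simp at hslen
  have hper : _root_.HasPeriod (s ++ (s ++ s)) s.length :=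
    period_of_append_prefix s (s ++ s) hsne ⟨s, by simp [List.append_assoc]⟩
  have h := hpf (s ++ (s ++ s)) s.length hb (by simp [hsne]) hper
  have hUlen : (s ++ (s ++ s)).length = 3 * s.length := by
    simp [List.length_append]; ring
  rw [hUlen] at h
  have hL : (0 : ℚ) < (s.length : ℚ) := by exact_mod_cast hslen
  rw [div_lt_iff₀ hL] at h
  push_cast at h
  linarith

lemma no_five_power {z : InfWord} (hpf : PowerFree (16 / 7) (tauInf z)) {v : Word}
    (hv : v ≠ [])
    (hfac : IsFactor z (v ++ (v ++ (v ++ (v ++ v))))) : False := by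
  obtain ⟨b, hb⟩ := isFactor_tau hfac
  have hvlen : 0 < v.length := List.length_pos_iff.mpr hv
  set s := tauAux b v with hs
  have hslen : 0 < s.length := by
    rw [hs]
    have h1 := tauAux_len v b
    omega
  have hsne : s ≠ [] := by
    intro h; rw [h] at hslen; simp at hslen
  have hL : (0 : ℚ) < (s.length : ℚ) := by exact_mod_cast hslen
  rcases Nat.mod_two_eq_zero_or_one v.length with hpar | hpar
  · have hexp : tauAux b (v ++ (v ++ (v ++ (v ++ v))))
        = s ++ (s ++ (s ++ (s ++ s))) := by
      rw [tauAux_append, if_pos hpar, tauAux_append, if_pos hpar,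
        tauAux_append, if_pos hpar, tauAux_append, if_pos hpar]
    rw [hexp] at hb
    have hper : _root_.HasPeriod (s ++ (s ++ (s ++ (s ++ s)))) s.length :=
      period_of_append_prefix s (s ++ (s ++ (s ++ s))) hsne
        ⟨s, by simp [List.append_assoc]⟩
    have h := hpf _ s.length hb (by simp [hsne]) hper
    have hUlen : (s ++ (s ++ (s ++ (s ++ s)))).length = 5 * s.length := by
      simp [List.length_append]; ring
    rw [hUlen] at h
    rw [div_lt_iff₀ hL] at h
    push_cast at h
    linarith
  · set t := tauAux (!b) v with ht
    have htlen : t.length = s.length := tauAux_len_eq v (!b) b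
    have hodd : (if v.length % 2 = 0 then b else !b) = !b := by
      rw [if_neg]; omega
    have hodd' : (if v.length % 2 = 0 then !b else !(!b)) = b := by
      rw [if_neg, Bool.not_not]; omega
    have hexp : tauAux b (v ++ (v ++ (v ++ (v ++ v))))
        = s ++ (t ++ (s ++ (t ++ s))) := by
      rw [tauAux_append, hodd, tauAux_append, hodd', tauAux_append, hodd,
        tauAux_append, hodd']
    rw [hexp] at hb
    have hassoc : s ++ (t ++ (s ++ (t ++ s))) = (s ++ t) ++ (s ++ (t ++ s)) := by
      simp [List.append_assoc]
    have hstne : s ++ t ≠ [] := by simp [hsne]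
    have hper : _root_.HasPeriod (s ++ (t ++ (s ++ (t ++ s)))) (s ++ t).length := by
      rw [hassoc]
      exact period_of_append_prefix (s ++ t) (s ++ (t ++ s)) hstne
        ⟨t ++ s, by simp [List.append_assoc]⟩
    have h := hpf _ (s ++ t).length hb (by simp [hsne]) hper
    have hUlen : (s ++ (t ++ (s ++ (t ++ s)))).length = 5 * s.length := by
      simp [List.length_append, htlen]; ring
    have hPlen : (s ++ t).length = 2 * s.length := by
      simp [List.length_append, htlen]; ring
    rw [hUlen, hPlen] at h
    have hL2 : (0 : ℚ) < ((2 * s.length : ℕ) : ℚ) := by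
      push_cast; linarith
    rw [div_lt_iff₀ hL2] at h
    push_cast at h
    linarith

end Aux
/-- If `τ(g(fⁿ(x)))` is `16/7`-power-free for some `n ≥ 0`, then `x` is
`5`-power-free and even-`3`-power-free. -/
theorem bad_cubes (x : InfWord) (n : ℕ)
    (hpf : PowerFree (16 / 7) (tauInf (gInf (fInf^[n] x)))) :
    PowerFree 5 x ∧
      ∀ p : Word, p ≠ [] → p.count 2 % 2 = 0 → ¬ IsFactor x (p ++ p ++ p) := by
  constructor
  · intro u p hfac hne hper
    by_contra hcon
    push_neg at hcon
    have hp0 : 0 < p := hper.1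
    have hpq : (0 : ℚ) < (p : ℚ) := by exact_mod_cast hp0
    rw [le_div_iff₀ hpq] at hcon
    have h5 : 5 * p ≤ u.length := by exact_mod_cast hcon
    set q := u.take p with hq
    have hqlen : q.length = p := by
      rw [hq, List.length_take]; omega
    have hqne : q ≠ [] := by
      intro h; rw [h] at hqlen; simp at hqlen; omega
    have hq5 : u.take (5 * p) = q ++ (q ++ (q ++ (q ++ q))) := period_take5 hper h5
    have hfac5 : IsFactor x (q ++ (q ++ (q ++ (q ++ q)))) := by
      rw [← hq5]; exact isFactor_take hfac h5
    have h1 := isFactor_fInf_iter n hfac5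
    rw [fListIter_append, fListIter_append, fListIter_append, fListIter_append] at h1
    have h2 := isFactor_gInf h1
    rw [gList_append, gList_append, gList_append, gList_append] at h2
    set v := gList (fList^[n] q) with hv
    have hvlen : 0 < v.length := by
      rw [hv]
      have ha := gList_len (fList^[n] q)
      have hb := fListIter_len n q
      omega
    have hvne : v ≠ [] := by
      intro h; rw [h] at hvlen; simp at hvlen
    exact no_five_power hpf hvne h2
  · intro P hPne hPc hfac
    have hfac' : IsFactor x (P ++ (P ++ P)) := by
      rw [← List.append_assoc]; exact hfac
    have h1 := isFactor_fInf_iter n hfac'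
    rw [fListIter_append, fListIter_append] at h1
    have h2 := isFactor_gInf h1
    rw [gList_append, gList_append] at h2
    set v := gList (fList^[n] P) with hv
    have hvlen : 0 < v.length := by
      rw [hv]
      have ha := gList_len (fList^[n] P)
      have hb := fListIter_len n P
      have hc : 0 < P.length := List.length_pos_iff.mpr hPne
      omega
    have hvne : v ≠ [] := by
      intro h; rw [h] at hvlen; simp at hvlen
    have hpar : v.length % 2 = 0 := by
      rw [hv, gList_len_parity, fListIter_count2, hPc]
    exact no_even_cube hpf hvne hpar h2
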